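/- The function P(x,y,t) = (√3 / (π D² (t-t₀)²)) · exp(−(6(y − x(t−t₀)/2)² / (D²(t−t₀)³) + x² / (2D²(t−t₀)))) satisfies the PDE ∂P/∂t + x ∂P/∂y = (D²/2) ∂²P/∂x² for all t > t₀ and (x,y) ∈ ℝ². -/

import Mathlib

open Real

/-- The self-similar Gaussian density of a Brownian particle diffusing in the
`x`-direction of a Couette shear flow. -/
noncomputable def shearDensity (D t₀ x y t : ℝ) : ℝ :=
  Real.sqrt 3 / (Real.pi * D ^ 2 * (t - t₀) ^ 2) *
    Real.exp (-(6 * (y - x * (t - t₀) / 2) ^ 2 / (D ^ 2 * (t - t₀) ^ 3)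
      + x ^ 2 / (2 * D ^ 2 * (t - t₀))))

lemma hd_y (D t₀ x y t : ℝ) :
    HasDerivAt (fun y' => shearDensity D t₀ x y' t)
      (shearDensity D t₀ x y t * (-(12 * (y - x * (t - t₀) / 2) / (D ^ 2 * (t - t₀) ^ 3)))) y := by
  have h1 : HasDerivAt (fun y' : ℝ => y' - x * (t - t₀) / 2) 1 y := by
    simpa using (hasDerivAt_id y).sub_const (x * (t - t₀) / 2)
  have h2 := ((h1.pow 2).const_mul 6).div_const (D ^ 2 * (t - t₀) ^ 3)
  have h3 := (h2.add (hasDerivAt_const y (x ^ 2 / (2 * D ^ 2 * (t - t₀))))).neg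
  have h4 := (h3.exp).const_mul (Real.sqrt 3 / (Real.pi * D ^ 2 * (t - t₀) ^ 2))
  refine h4.congr_deriv ?_
  simp only [Pi.pow_apply, Pi.add_apply, Pi.neg_apply, Pi.sub_apply, Pi.div_apply, Pi.mul_apply, id]
  simp only [shearDensity]
  ring

lemma hd_x (D t₀ x y t : ℝ) (hD : D ≠ 0) (hτ : t - t₀ ≠ 0) :
    HasDerivAt (fun x' => shearDensity D t₀ x' y t)
      (shearDensity D t₀ x y t *
        (6 * (y - x * (t - t₀) / 2) / (D ^ 2 * (t - t₀) ^ 2) - x / (D ^ 2 * (t - t₀)))) x := by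
  have h1 : HasDerivAt (fun x' : ℝ => y - x' * (t - t₀) / 2) (-((t - t₀) / 2)) x := by
    simpa using (((hasDerivAt_id x).mul_const (t - t₀)).div_const 2).const_sub y
  have h2 := ((h1.pow 2).const_mul 6).div_const (D ^ 2 * (t - t₀) ^ 3)
  have h3 := (h2.add ((hasDerivAt_pow 2 x).div_const (2 * D ^ 2 * (t - t₀)))).neg
  have h4 := (h3.exp).const_mul (Real.sqrt 3 / (Real.pi * D ^ 2 * (t - t₀) ^ 2))
  refine h4.congr_deriv ?_
  simp only [Pi.pow_apply, Pi.add_apply, Pi.neg_apply, Pi.sub_apply, Pi.div_apply, Pi.mul_apply, id]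
  simp only [shearDensity]
  field_simp
  ring

lemma hd_xx (D t₀ x y t : ℝ) (hD : D ≠ 0) (hτ : t - t₀ ≠ 0) :
    HasDerivAt (fun x' => shearDensity D t₀ x' y t *
        (6 * (y - x' * (t - t₀) / 2) / (D ^ 2 * (t - t₀) ^ 2) - x' / (D ^ 2 * (t - t₀))))
      (shearDensity D t₀ x y t *
        ((6 * (y - x * (t - t₀) / 2) / (D ^ 2 * (t - t₀) ^ 2) - x / (D ^ 2 * (t - t₀))) ^ 2
          - 4 / (D ^ 2 * (t - t₀)))) x := by
  have h1 : HasDerivAt (fun x' : ℝ => y - x' * (t - t₀) / 2) (-((t - t₀) / 2)) x := by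
    simpa using (((hasDerivAt_id x).mul_const (t - t₀)).div_const 2).const_sub y
  have hL := ((h1.const_mul 6).div_const (D ^ 2 * (t - t₀) ^ 2)).sub
    ((hasDerivAt_id x).div_const (D ^ 2 * (t - t₀)))
  have h := (hd_x D t₀ x y t hD hτ).mul hL
  refine h.congr_deriv ?_
  simp only [Pi.pow_apply, Pi.add_apply, Pi.neg_apply, Pi.sub_apply, Pi.div_apply, Pi.mul_apply, id]
  field_simp
  ring

lemma hd_t (D t₀ x y t : ℝ) (hD : D ≠ 0) (hτ : t - t₀ ≠ 0) :
    HasDerivAt (fun s => shearDensity D t₀ x y s)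
      (shearDensity D t₀ x y t *
        (-(2 / (t - t₀)) + 6 * x * (y - x * (t - t₀) / 2) / (D ^ 2 * (t - t₀) ^ 3)
          + 18 * (y - x * (t - t₀) / 2) ^ 2 / (D ^ 2 * (t - t₀) ^ 4)
          + x ^ 2 / (2 * D ^ 2 * (t - t₀) ^ 2))) t := by
  have hτ' : HasDerivAt (fun s : ℝ => s - t₀) 1 t := (hasDerivAt_id t).sub_const t₀
  have hu : HasDerivAt (fun s : ℝ => y - x * (s - t₀) / 2) (-(x * 1 / 2)) t :=
    ((hτ'.const_mul x).div_const 2).const_sub y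
  have hden1 : D ^ 2 * (t - t₀) ^ 3 ≠ 0 := by positivity
  have hden2 : 2 * D ^ 2 * (t - t₀) ≠ 0 := by positivity
  have hden3 : Real.pi * D ^ 2 * (t - t₀) ^ 2 ≠ 0 := by positivity
  have hterm1 := ((hu.pow 2).const_mul 6).div ((hτ'.pow 3).const_mul (D ^ 2)) hden1
  have hterm2 := (hasDerivAt_const t (x ^ 2)).div (hτ'.const_mul (2 * D ^ 2)) hden2
  have hE := (hterm1.add hterm2).neg
  have hpre := (hasDerivAt_const t (Real.sqrt 3)).div ((hτ'.pow 2).const_mul (Real.pi * D ^ 2)) hden3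
  have h := hpre.mul hE.exp
  refine h.congr_deriv ?_
  simp only [Pi.pow_apply, Pi.add_apply, Pi.neg_apply, Pi.sub_apply, Pi.div_apply, Pi.mul_apply, id]
  simp only [shearDensity]
  have hπ := Real.pi_ne_zero
  field_simp
  ring

theorem shearDensity_satisfies_pde (D t₀ : ℝ) (hD : 0 < D) :
    ∀ x y t : ℝ, t₀ < t →
      deriv (fun s => shearDensity D t₀ x y s) t
        + x * deriv (fun y' => shearDensity D t₀ x y' t) y
      = D ^ 2 / 2 *
          deriv (fun x' => deriv (fun x'' => shearDensity D t₀ x'' y t) x') x := by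
  intro x y t ht
  have hτ : t - t₀ ≠ 0 := sub_ne_zero.mpr ht.ne'
  have hD' : D ≠ 0 := hD.ne'
  have hxfun : (fun x' => deriv (fun x'' => shearDensity D t₀ x'' y t) x')
      = fun x' => shearDensity D t₀ x' y t *
        (6 * (y - x' * (t - t₀) / 2) / (D ^ 2 * (t - t₀) ^ 2) - x' / (D ^ 2 * (t - t₀))) :=
    funext fun x' => (hd_x D t₀ x' y t hD' hτ).deriv
  rw [(hd_t D t₀ x y t hD' hτ).deriv, (hd_y D t₀ x y t).deriv, hxfun,
    (hd_xx D t₀ x y t hD' hτ).deriv]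
  field_simp
  ring
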